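/- Concentration for intersections with random complements: Fix integers m, ℓ, ℓ', t with m ≥ tℓ + ℓ', fix a > 0, and set ε = (2a + √(8 ln 2))/√t. Let G ⊆ binom([m], ℓ) with density α := |G|/C(m,ℓ). If H is uniformly distributed on binom([m], ℓ'), then P[ |{G ∈ G : G ∩ H = ∅}| < (α − ε)·C(m − ℓ', ℓ) ] < 2e^{−a²/2}. -/

import Mathlib

open Finset

/-- number of (k+1)-subsets of V containing a fixed x ∈ V -/
lemma count_mem_one (k : ℕ) (V : Finset ℕ) (x : ℕ) (hx : x ∈ V) :
    ((Finset.powersetCard (k+1) V).filter (fun S => x ∈ S)).card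
      = (V.card - 1).choose k := by
  rw [← Finset.card_erase_of_mem hx, ← Finset.card_powersetCard k (V.erase x)]
  apply Finset.card_nbij' (fun S => S.erase x) (fun T => insert x T)
  · intro S hS
    simp only [Finset.mem_coe, Finset.mem_filter, Finset.mem_powersetCard] at hS
    simp only [Finset.mem_coe, Finset.mem_powersetCard]
    exact ⟨Finset.erase_subset_erase x hS.1.1,
      by rw [Finset.card_erase_of_mem hS.2, hS.1.2]; rfl⟩
  · intro T hT
    simp only [Finset.mem_coe, Finset.mem_powersetCard] at hT
    have hxT : x ∉ T := fun h => (Finset.mem_erase.mp (hT.1 h)).1 rfl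
    simp only [Finset.mem_coe, Finset.mem_filter, Finset.mem_powersetCard]
    refine ⟨⟨Finset.insert_subset hx (hT.1.trans (Finset.erase_subset x V)), ?_⟩,
      Finset.mem_insert_self x T⟩
    rw [Finset.card_insert_of_notMem hxT, hT.2]
  · intro S hS
    simp only [Finset.mem_coe, Finset.mem_filter] at hS
    exact Finset.insert_erase hS.2
  · intro T hT
    simp only [Finset.mem_coe, Finset.mem_powersetCard] at hT
    exact Finset.erase_insert (fun h => (Finset.mem_erase.mp (hT.1 h)).1 rfl)

/-- number of (k+2)-subsets of V containing fixed distinct x,y ∈ V -/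
lemma count_mem_two (k : ℕ) (V : Finset ℕ) (x y : ℕ) (hx : x ∈ V) (hy : y ∈ V)
    (hxy : x ≠ y) :
    ((Finset.powersetCard (k+2) V).filter (fun S => x ∈ S ∧ y ∈ S)).card
      = (V.card - 2).choose k := by
  have h1 : ((Finset.powersetCard (k+2) V).filter (fun S => x ∈ S ∧ y ∈ S)).card
      = (((V.erase x).powersetCard (k+1)).filter (fun S => y ∈ S)).card := by
    apply Finset.card_nbij' (fun S => S.erase x) (fun T => insert x T)
    · intro S hS
      simp only [Finset.mem_coe, Finset.mem_filter, Finset.mem_powersetCard] at hS ⊢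
      exact ⟨⟨Finset.erase_subset_erase x hS.1.1,
        by rw [Finset.card_erase_of_mem hS.2.1, hS.1.2]; rfl⟩,
        Finset.mem_erase.mpr ⟨hxy.symm, hS.2.2⟩⟩
    · intro T hT
      simp only [Finset.mem_coe, Finset.mem_filter, Finset.mem_powersetCard] at hT ⊢
      have hxT : x ∉ T := fun h => (Finset.mem_erase.mp (hT.1.1 h)).1 rfl
      refine ⟨⟨Finset.insert_subset hx (hT.1.1.trans (Finset.erase_subset x V)), ?_⟩,
        Finset.mem_insert_self x T, Finset.mem_insert_of_mem hT.2⟩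
      rw [Finset.card_insert_of_notMem hxT, hT.1.2]
    · intro S hS
      simp only [Finset.mem_coe, Finset.mem_filter] at hS
      exact Finset.insert_erase hS.2.1
    · intro T hT
      simp only [Finset.mem_coe, Finset.mem_filter, Finset.mem_powersetCard] at hT
      exact Finset.erase_insert (fun h => (Finset.mem_erase.mp (hT.1.1 h)).1 rfl)
  rw [h1, count_mem_one k (V.erase x) y (Finset.mem_erase.mpr ⟨hxy.symm, hy⟩),
    Finset.card_erase_of_mem hx]
  congr 1

/-- the number of members of G inside V -/
def cntG (G : Finset (Finset ℕ)) (V : Finset ℕ) : ℕ := (G.filter (· ⊆ V)).card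

/-- the number of members of G inside V containing x -/
def degG (G : Finset (Finset ℕ)) (x : ℕ) (V : Finset ℕ) : ℕ :=
  (G.filter (fun S => S ⊆ V ∧ x ∈ S)).card

lemma degG_eq_sum (G : Finset (Finset ℕ)) (x : ℕ) (V : Finset ℕ) :
    degG G x V = ∑ S ∈ G.filter (· ⊆ V), if x ∈ S then 1 else 0 := by
  rw [degG, ← Finset.card_filter, Finset.filter_filter]

lemma sum_degG {G : Finset (Finset ℕ)} {ℓ : ℕ} (hsz : ∀ S ∈ G, S.card = ℓ)
    (V : Finset ℕ) : ∑ x ∈ V, degG G x V = ℓ * cntG G V := by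
  simp_rw [degG_eq_sum]
  rw [Finset.sum_comm]
  have h : ∀ S ∈ G.filter (· ⊆ V), (∑ x ∈ V, if x ∈ S then 1 else 0) = ℓ := by
    intro S hS
    rw [Finset.mem_filter] at hS
    rw [← Finset.card_filter]
    rw [Finset.filter_mem_eq_inter, Finset.inter_eq_right.mpr hS.2]
    exact hsz S hS.1
  rw [Finset.sum_congr rfl h, Finset.sum_const, smul_eq_mul, cntG, mul_comm]

lemma cntG_erase (G : Finset (Finset ℕ)) (x : ℕ) (V : Finset ℕ) :
    cntG G (V.erase x) + degG G x V = cntG G V := by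
  unfold cntG degG
  have h : ∀ S : Finset ℕ, S ⊆ V.erase x ↔ S ⊆ V ∧ x ∉ S := by
    intro S; exact Finset.subset_erase
  rw [Finset.filter_congr (fun S _ => h S)]
  have := Finset.card_filter_add_card_filter_not
    (s := G.filter (· ⊆ V)) (p := fun S => x ∉ S)
  simp only [Finset.filter_filter, not_not] at this
  rw [← this]

lemma degG_le {G : Finset (Finset ℕ)} {ℓ : ℕ} (hsz : ∀ S ∈ G, S.card = ℓ)
    (hl : 1 ≤ ℓ) {x : ℕ} {V : Finset ℕ} (hx : x ∈ V) :
    degG G x V ≤ (V.card - 1).choose (ℓ - 1) := by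
  rw [← count_mem_one (ℓ-1) V x hx]
  apply Finset.card_le_card
  intro S hS
  rw [Finset.mem_filter] at hS ⊢
  rw [Finset.mem_powersetCard]
  refine ⟨⟨hS.2.1, ?_⟩, hS.2.2⟩
  rw [hsz S hS.1]; omega

lemma cntG_le {G : Finset (Finset ℕ)} {ℓ : ℕ} (hsz : ∀ S ∈ G, S.card = ℓ)
    (V : Finset ℕ) : cntG G V ≤ V.card.choose ℓ := by
  rw [← Finset.card_powersetCard]
  apply Finset.card_le_card
  intro S hS
  rw [Finset.mem_filter] at hS
  rw [Finset.mem_powersetCard]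
  exact ⟨hS.2, hsz S hS.1⟩

/-- Key identity: sum over ℓ-subsets of squares of window sums, for centered u. -/
lemma sum_sq_window (u : ℕ → ℝ) (V : Finset ℕ) (ℓ : ℕ) (hl : 1 ≤ ℓ) (hv : ℓ + 1 ≤ V.card)
    (hu : ∑ x ∈ V, u x = 0) :
    ∑ S ∈ Finset.powersetCard ℓ V, (∑ x ∈ S, u x)^2
      = ((V.card - 2).choose (ℓ - 1)) * ∑ x ∈ V, (u x)^2 := by
  have key : ∀ S ∈ Finset.powersetCard ℓ V, (∑ x ∈ S, u x)^2
      = ∑ x ∈ V, ∑ y ∈ V, (if x ∈ S ∧ y ∈ S then u x * u y else 0) := by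
    intro S hS
    have hSV : S ⊆ V := (Finset.mem_powersetCard.mp hS).1
    have hyS : ∀ x : ℕ, ∑ y ∈ V, (if x ∈ S ∧ y ∈ S then u x * u y else 0)
        = if x ∈ S then ∑ y ∈ S, u x * u y else 0 := by
      intro x
      by_cases hx : x ∈ S
      · simp only [hx, true_and, if_true]
        rw [Finset.sum_ite_mem, Finset.inter_eq_right.mpr hSV]
      · simp [hx]
    simp_rw [hyS]
    rw [Finset.sum_ite_mem, Finset.inter_eq_right.mpr hSV, sq, Finset.sum_mul]
    congr 1; ext x; rw [Finset.mul_sum]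
  rw [Finset.sum_congr rfl key, Finset.sum_comm]
  have swap2 : ∀ x : ℕ, ∑ S ∈ Finset.powersetCard ℓ V,
      ∑ y ∈ V, (if x ∈ S ∧ y ∈ S then u x * u y else 0)
      = ∑ y ∈ V, (((Finset.powersetCard ℓ V).filter
          (fun S => x ∈ S ∧ y ∈ S)).card : ℝ) * (u x * u y) := by
    intro x
    rw [Finset.sum_comm]
    congr 1; ext y
    rw [← Finset.sum_filter, Finset.sum_const, nsmul_eq_mul]
  rw [Finset.sum_congr rfl (fun x _ => swap2 x)]
  -- now split into diagonal and off-diagonal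
  rcases Nat.lt_or_ge ℓ 2 with h2 | h2
  · -- ℓ = 1
    have hℓ1 : ℓ = 1 := by omega
    subst hℓ1
    have hdiag : ∀ x ∈ V, ∑ y ∈ V, (((Finset.powersetCard 1 V).filter
          (fun S => x ∈ S ∧ y ∈ S)).card : ℝ) * (u x * u y) = (u x)^2 := by
      intro x hx
      rw [← Finset.add_sum_erase _ _ hx]
      have h1 : ((Finset.powersetCard 1 V).filter (fun S => x ∈ S ∧ x ∈ S)).card = 1 := by
        have hpred : ((Finset.powersetCard 1 V).filter (fun S => x ∈ S ∧ x ∈ S))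
            = (Finset.powersetCard 1 V).filter (fun S => x ∈ S) := by
          apply Finset.filter_congr; intro S _; simp
        rw [hpred, count_mem_one 0 V x hx, Nat.choose_zero_right]
      have h0 : ∀ y ∈ V.erase x, (((Finset.powersetCard 1 V).filter
          (fun S => x ∈ S ∧ y ∈ S)).card : ℝ) * (u x * u y) = 0 := by
        intro y hy
        have hxy : y ≠ x := (Finset.mem_erase.mp hy).1
        have : ((Finset.powersetCard 1 V).filter (fun S => x ∈ S ∧ y ∈ S)) = ∅ := by
          apply Finset.filter_false_of_mem
          intro S hS
          have := (Finset.mem_powersetCard.mp hS).2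
          intro ⟨hxS, hyS⟩
          exact hxy (Finset.card_le_one.mp (le_of_eq this) y hyS x hxS)
        rw [this]; simp
      rw [Finset.sum_congr rfl h0, h1]
      simp [sq]
    rw [Finset.sum_congr rfl hdiag]
    simp
  · -- ℓ ≥ 2
    obtain ⟨k, rfl⟩ : ∃ k, ℓ = k + 2 := ⟨ℓ - 2, by omega⟩
    have hsplit : ∀ x ∈ V, ∑ y ∈ V, (((Finset.powersetCard (k+2) V).filter
          (fun S => x ∈ S ∧ y ∈ S)).card : ℝ) * (u x * u y)
        = ((V.card - 1).choose (k+1) : ℝ) * (u x)^2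
          - ((V.card - 2).choose k : ℝ) * (u x)^2 := by
      intro x hx
      rw [← Finset.add_sum_erase _ _ hx]
      have h1 : ((Finset.powersetCard (k+2) V).filter (fun S => x ∈ S ∧ x ∈ S)).card
          = (V.card - 1).choose (k+1) := by
        have hpred : ((Finset.powersetCard (k+2) V).filter (fun S => x ∈ S ∧ x ∈ S))
            = (Finset.powersetCard (k+2) V).filter (fun S => x ∈ S) := by
          apply Finset.filter_congr; intro S _; simp
        rw [hpred, count_mem_one (k+1) V x hx]
      have h0 : ∀ y ∈ V.erase x, (((Finset.powersetCard (k+2) V).filter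
          (fun S => x ∈ S ∧ y ∈ S)).card : ℝ) * (u x * u y)
          = ((V.card - 2).choose k : ℝ) * (u x * u y) := by
        intro y hy
        obtain ⟨hyx, hyV⟩ := Finset.mem_erase.mp hy
        rw [count_mem_two k V x y hx hyV (Ne.symm hyx)]
      rw [Finset.sum_congr rfl h0, h1, ← Finset.mul_sum]
      have hsum : ∑ y ∈ V.erase x, u x * u y = - (u x)^2 := by
        rw [← Finset.mul_sum, Finset.sum_erase_eq_sub hx, hu, sq]
        ring
      rw [hsum, sq]
      ring
    rw [Finset.sum_congr rfl hsplit, Finset.sum_sub_distrib, ← Finset.mul_sum, ← Finset.mul_sum]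
    have hpascal : (V.card - 1).choose (k+1)
        = (V.card - 2).choose k + (V.card - 2).choose (k+1) := by
      have hv2 : V.card - 1 = (V.card - 2) + 1 := by omega
      rw [hv2]
      exact Nat.choose_succ_succ (V.card - 2) k
    have : ((k+2) - 1 : ℕ) = k + 1 := by omega
    rw [this, hpascal]
    push_cast
    ring

/-- centered degree -/
noncomputable def uC (G : Finset (Finset ℕ)) (ℓ : ℕ) (V : Finset ℕ) (x : ℕ) : ℝ :=
  (V.card : ℝ) * (degG G x V) - (ℓ : ℝ) * (cntG G V)

lemma sum_uC {G : Finset (Finset ℕ)} {ℓ : ℕ} (hsz : ∀ S ∈ G, S.card = ℓ)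
    (V : Finset ℕ) : ∑ x ∈ V, uC G ℓ V x = 0 := by
  unfold uC
  rw [Finset.sum_sub_distrib, ← Finset.mul_sum, Finset.sum_const, ← Nat.cast_sum,
    sum_degG hsz V]
  push_cast
  ring

lemma sum_window_uC {G : Finset (Finset ℕ)} {ℓ : ℕ} (hsz : ∀ S ∈ G, S.card = ℓ)
    (V : Finset ℕ) :
    (V.card : ℝ) * ∑ S ∈ G.filter (· ⊆ V), (∑ x ∈ S, uC G ℓ V x)
      = ∑ x ∈ V, (uC G ℓ V x)^2 := by
  have hswap : ∑ S ∈ G.filter (· ⊆ V), (∑ x ∈ S, uC G ℓ V x)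
      = ∑ x ∈ V, (uC G ℓ V x) * (degG G x V) := by
    have h1 : ∀ S ∈ G.filter (· ⊆ V), (∑ x ∈ S, uC G ℓ V x)
        = ∑ x ∈ V, if x ∈ S then uC G ℓ V x else 0 := by
      intro S hS
      rw [Finset.sum_ite_mem,
        Finset.inter_eq_right.mpr (Finset.mem_filter.mp hS).2]
    rw [Finset.sum_congr rfl h1, Finset.sum_comm]
    congr 1; ext x
    rw [← Finset.sum_filter, Finset.sum_const, nsmul_eq_mul, degG_eq_sum,
      ← Finset.card_filter]
    push_cast
    ring
  rw [hswap, Finset.mul_sum]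
  have h2 : ∀ x ∈ V, (V.card : ℝ) * ((uC G ℓ V x) * (degG G x V))
      = (uC G ℓ V x)^2 + (ℓ : ℝ) * (cntG G V) * uC G ℓ V x := by
    intro x _
    have : (V.card : ℝ) * (degG G x V) = uC G ℓ V x + (ℓ:ℝ) * cntG G V := by
      unfold uC; ring
    calc (V.card : ℝ) * ((uC G ℓ V x) * (degG G x V))
        = ((V.card : ℝ) * degG G x V) * uC G ℓ V x := by ring
      _ = (uC G ℓ V x)^2 + (ℓ : ℝ) * (cntG G V) * uC G ℓ V x := by rw [this]; ring
  rw [Finset.sum_congr rfl h2, Finset.sum_add_distrib, ← Finset.mul_sum, sum_uC hsz V]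
  ring

/-- The key variance bound. -/
lemma var_uC {G : Finset (Finset ℕ)} {ℓ : ℕ} (hsz : ∀ S ∈ G, S.card = ℓ)
    (hl : 1 ≤ ℓ) {V : Finset ℕ} (hv : ℓ + 1 ≤ V.card) :
    ∑ x ∈ V, (uC G ℓ V x)^2
      ≤ (V.card:ℝ)^2 * ((V.card - 2).choose (ℓ - 1)) * cntG G V := by
  set A := ∑ x ∈ V, (uC G ℓ V x)^2 with hA
  have hA0 : 0 ≤ A := Finset.sum_nonneg (fun x _ => sq_nonneg _)
  rcases eq_or_lt_of_le hA0 with h0 | hpos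
  · rw [← h0]
    positivity
  · have hCS : ((∑ S ∈ G.filter (· ⊆ V), (∑ x ∈ S, uC G ℓ V x)))^2
        ≤ (cntG G V : ℝ) * ∑ S ∈ G.filter (· ⊆ V), (∑ x ∈ S, uC G ℓ V x)^2 := by
      have := Finset.sum_mul_sq_le_sq_mul_sq (G.filter (· ⊆ V))
        (fun _ => (1:ℝ)) (fun S => ∑ x ∈ S, uC G ℓ V x)
      simpa [cntG] using this
    have hsub : ∑ S ∈ G.filter (· ⊆ V), (∑ x ∈ S, uC G ℓ V x)^2
        ≤ ∑ S ∈ Finset.powersetCard ℓ V, (∑ x ∈ S, uC G ℓ V x)^2 := by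
      apply Finset.sum_le_sum_of_subset_of_nonneg
      · intro S hS
        rw [Finset.mem_filter] at hS
        rw [Finset.mem_powersetCard]
        exact ⟨hS.2, hsz S hS.1⟩
      · intro S _ _; exact sq_nonneg _
    have hW := sum_sq_window (uC G ℓ V) V ℓ hl hv (sum_uC hsz V)
    have hkey : A^2 ≤ (V.card:ℝ)^2 * ((V.card - 2).choose (ℓ - 1)) * (cntG G V) * A := by
      have h1 : A = (V.card : ℝ) * ∑ S ∈ G.filter (· ⊆ V), (∑ x ∈ S, uC G ℓ V x) :=
        (sum_window_uC hsz V).symm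
      have hvpos : (0:ℝ) < V.card := by
        have : 0 < V.card := by omega
        exact_mod_cast this
      calc A^2 = (V.card:ℝ)^2 * ((∑ S ∈ G.filter (· ⊆ V), (∑ x ∈ S, uC G ℓ V x)))^2 := by
            rw [h1]; ring
        _ ≤ (V.card:ℝ)^2 * ((cntG G V : ℝ)
              * ∑ S ∈ G.filter (· ⊆ V), (∑ x ∈ S, uC G ℓ V x)^2) := by
            apply mul_le_mul_of_nonneg_left hCS (by positivity)
        _ ≤ (V.card:ℝ)^2 * ((cntG G V : ℝ)
              * ∑ S ∈ Finset.powersetCard ℓ V, (∑ x ∈ S, uC G ℓ V x)^2) := by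
            apply mul_le_mul_of_nonneg_left _ (by positivity)
            apply mul_le_mul_of_nonneg_left hsub (by positivity)
        _ = (V.card:ℝ)^2 * ((V.card - 2).choose (ℓ - 1)) * (cntG G V) * A := by
            rw [hW, hA]; ring
    nlinarith [hkey, hpos]

/-- density of G at level ℓ inside V -/
noncomputable def FG (G : Finset (Finset ℕ)) (ℓ : ℕ) (V : Finset ℕ) : ℝ :=
  (cntG G V : ℝ) / (V.card.choose ℓ)

lemma choose_id1 {v ℓ : ℕ} (hl : 1 ≤ ℓ) (hv : ℓ + 1 ≤ v) :
    v * (v-1).choose ℓ + ℓ * v.choose ℓ = v * v.choose ℓ := by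
  have hpascal : v.choose ℓ = (v-1).choose ℓ + (v-1).choose (ℓ-1) := by
    have key := Nat.choose_succ_succ (v-1) (ℓ-1)
    have e1 : (v-1).succ = v := by omega
    have e2 : (ℓ-1).succ = ℓ := by omega
    rw [e1, e2] at key
    omega
  have hmul : v * (v-1).choose (ℓ-1) = ℓ * v.choose ℓ := by
    have := Nat.add_one_mul_choose_eq (v-1) (ℓ-1)
    have h1 : (v-1) + 1 = v := by omega
    have h2 : (ℓ-1) + 1 = ℓ := by omega
    rw [h1, h2] at this
    rw [this]; ring
  calc v * (v-1).choose ℓ + ℓ * v.choose ℓ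
      = v * (v-1).choose ℓ + v * (v-1).choose (ℓ-1) := by rw [hmul]
    _ = v * ((v-1).choose ℓ + (v-1).choose (ℓ-1)) := by ring
    _ = v * v.choose ℓ := by rw [← hpascal]

lemma choose_id2 {v ℓ : ℕ} (hl : 1 ≤ ℓ) (hv : ℓ + 1 ≤ v) :
    (v - ℓ) * v.choose ℓ = v * (v-1).choose ℓ := by
  have h := choose_id1 hl hv
  have : (v - ℓ) * v.choose ℓ = v * v.choose ℓ - ℓ * v.choose ℓ := by
    rw [Nat.sub_mul]
  omega

lemma choose_id3 {v ℓ : ℕ} (hl : 1 ≤ ℓ) (hv : ℓ + 1 ≤ v) :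
    (v - ℓ) * (v-1).choose (ℓ-1) = ℓ * (v-1).choose ℓ := by
  have := Nat.choose_succ_right_eq (v-1) (ℓ-1)
  have h2 : (ℓ-1) + 1 = ℓ := by omega
  have h3 : (v-1) - (ℓ-1) = v - ℓ := by omega
  rw [h2, h3] at this
  rw [mul_comm (v - ℓ) _, mul_comm ℓ _]
  exact this.symm

lemma exp_quad {y : ℝ} (h : |y| ≤ 1) : Real.exp y ≤ 1 + y + (3/4)*y^2 := by
  have hb := Real.exp_bound h (n := 2) (by norm_num)
  have hsum : ∑ m ∈ Finset.range 2, y ^ m / (m.factorial : ℝ) = 1 + y := by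
    simp [Finset.sum_range_succ]
  rw [hsum] at hb
  have h2 : (|y|:ℝ) ^ 2 * ((2:ℕ).succ / ((2:ℕ).factorial * (2:ℕ) : ℝ)) = (3/4)*y^2 := by
    rw [sq_abs]
    norm_num [Nat.factorial]
    ring
  rw [h2] at hb
  have := (abs_le.mp hb).2
  linarith

section step
variable {G : Finset (Finset ℕ)} {ℓ : ℕ} {V : Finset ℕ}

lemma FG_erase_sub (hsz : ∀ S ∈ G, S.card = ℓ) (hl : 1 ≤ ℓ) (hv : ℓ + 1 ≤ V.card)
    {x : ℕ} (hx : x ∈ V) :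
    FG G ℓ (V.erase x) - FG G ℓ V
      = - uC G ℓ V x / ((V.card : ℝ) * ((V.card - 1).choose ℓ)) := by
  have hc1 : (0:ℝ) < (V.card.choose ℓ : ℝ) := by
    exact_mod_cast Nat.choose_pos (show ℓ ≤ V.card by omega)
  have hc2 : (0:ℝ) < ((V.card-1).choose ℓ : ℝ) := by
    exact_mod_cast Nat.choose_pos (show ℓ ≤ V.card - 1 by omega)
  have hvpos : (0:ℝ) < (V.card : ℝ) := by
    exact_mod_cast (show 0 < V.card by omega)
  have hcnt : (cntG G (V.erase x) : ℝ) = (cntG G V : ℝ) - (degG G x V : ℝ) := by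
    have h := cntG_erase G x V
    have : ((cntG G (V.erase x) + degG G x V : ℕ) : ℝ) = (cntG G V : ℝ) := by
      exact_mod_cast congrArg (Nat.cast : ℕ → ℝ) h
    push_cast at this
    linarith
  have hid : (V.card : ℝ) * ((V.card-1).choose ℓ) + ℓ * (V.card.choose ℓ)
      = V.card * V.card.choose ℓ := by exact_mod_cast choose_id1 hl hv
  unfold FG uC
  rw [Finset.card_erase_of_mem hx, hcnt]
  field_simp
  linear_combination (-(cntG G V : ℝ)) * hid

lemma uC_abs (hsz : ∀ S ∈ G, S.card = ℓ) (hl : 1 ≤ ℓ) (hv : ℓ + 1 ≤ V.card)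
    {x : ℕ} (hx : x ∈ V) :
    |uC G ℓ V x| ≤ (V.card : ℝ) * ((V.card-1).choose (ℓ-1)) := by
  have h1 : (degG G x V : ℝ) ≤ ((V.card-1).choose (ℓ-1) : ℝ) := by
    exact_mod_cast degG_le hsz hl hx
  have hd0 : (0:ℝ) ≤ (degG G x V : ℝ) := by positivity
  have hc0 : (0:ℝ) ≤ (cntG G V : ℝ) := by positivity
  have h2 : (ℓ:ℝ) * (cntG G V : ℝ) ≤ (V.card : ℝ) * ((V.card-1).choose (ℓ-1)) := by
    have hmul := Nat.add_one_mul_choose_eq (V.card - 1) (ℓ - 1)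
    have hcnt := cntG_le hsz V
    have e1 : (V.card - 1) + 1 = V.card := by omega
    have e2 : (ℓ-1) + 1 = ℓ := by omega
    rw [e1, e2] at hmul
    -- hmul : V.card * (V.card-1).choose (ℓ-1) = V.card.choose ℓ * ℓ
    have : ℓ * cntG G V ≤ V.card * (V.card-1).choose (ℓ-1) := by
      rw [hmul]
      calc ℓ * cntG G V ≤ ℓ * V.card.choose ℓ := Nat.mul_le_mul_left ℓ hcnt
        _ = V.card.choose ℓ * ℓ := Nat.mul_comm _ _
    exact_mod_cast this
  rw [abs_le]
  constructor
  · unfold uC; nlinarith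
  · unfold uC; nlinarith

lemma FG_step_abs (hsz : ∀ S ∈ G, S.card = ℓ) (hl : 1 ≤ ℓ) (hv : ℓ + 1 ≤ V.card)
    {x : ℕ} (hx : x ∈ V) :
    |FG G ℓ (V.erase x) - FG G ℓ V| ≤ (ℓ : ℝ) / ((V.card:ℝ) - ℓ) := by
  have hc2 : (0:ℝ) < ((V.card-1).choose ℓ : ℝ) := by
    exact_mod_cast Nat.choose_pos (show ℓ ≤ V.card - 1 by omega)
  have hvpos : (0:ℝ) < (V.card : ℝ) := by
    exact_mod_cast (show 0 < V.card by omega)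
  have hvl : (0:ℝ) < (V.card:ℝ) - ℓ := by
    have : (ℓ:ℝ) + 1 ≤ (V.card : ℝ) := by exact_mod_cast hv
    linarith
  rw [FG_erase_sub hsz hl hv hx, abs_div, abs_neg,
    abs_of_pos (mul_pos hvpos hc2), div_le_div_iff₀ (mul_pos hvpos hc2) hvl]
  have hu := uC_abs hsz hl hv hx
  have hid : ((V.card:ℝ) - ℓ) * ((V.card-1).choose (ℓ-1) : ℝ)
      = (ℓ:ℝ) * ((V.card-1).choose ℓ : ℝ) := by
    have := choose_id3 (v := V.card) hl hv
    have hcast := congrArg (Nat.cast : ℕ → ℝ) this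
    push_cast [Nat.cast_sub (show ℓ ≤ V.card by omega)] at hcast
    linarith
  calc |uC G ℓ V x| * ((V.card:ℝ) - ℓ)
      ≤ ((V.card : ℝ) * ((V.card-1).choose (ℓ-1))) * ((V.card:ℝ) - ℓ) := by
        apply mul_le_mul_of_nonneg_right hu (le_of_lt hvl)
    _ = (V.card : ℝ) * (((V.card:ℝ) - ℓ) * ((V.card-1).choose (ℓ-1))) := by ring
    _ = (V.card : ℝ) * ((ℓ:ℝ) * ((V.card-1).choose ℓ)) := by rw [hid]
    _ = (ℓ:ℝ) * ((V.card:ℝ) * ((V.card-1).choose ℓ)) := by ring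

lemma FG_step_mean (hsz : ∀ S ∈ G, S.card = ℓ) (hl : 1 ≤ ℓ) (hv : ℓ + 1 ≤ V.card) :
    ∑ x ∈ V, (FG G ℓ (V.erase x) - FG G ℓ V) = 0 := by
  rw [Finset.sum_congr rfl (fun x hx => FG_erase_sub hsz hl hv hx)]
  rw [← Finset.sum_div]
  rw [show ∑ x ∈ V, -uC G ℓ V x = -(∑ x ∈ V, uC G ℓ V x) by rw [Finset.sum_neg_distrib]]
  rw [sum_uC hsz V]
  simp

lemma FG_step_var (hsz : ∀ S ∈ G, S.card = ℓ) (hl : 1 ≤ ℓ) (hv : ℓ + 1 ≤ V.card) :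
    ∑ x ∈ V, (FG G ℓ (V.erase x) - FG G ℓ V)^2
      ≤ (ℓ : ℝ) * (V.card : ℝ) / (((V.card:ℝ)-1) * ((V.card:ℝ)-ℓ)) := by
  have hc2 : (0:ℝ) < ((V.card-1).choose ℓ : ℝ) := by
    exact_mod_cast Nat.choose_pos (show ℓ ≤ V.card - 1 by omega)
  have hc1 : (0:ℝ) < (V.card.choose ℓ : ℝ) := by
    exact_mod_cast Nat.choose_pos (show ℓ ≤ V.card by omega)
  have hvpos : (0:ℝ) < (V.card : ℝ) := by
    exact_mod_cast (show 0 < V.card by omega)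
  have hvl : (0:ℝ) < (V.card:ℝ) - ℓ := by
    have : (ℓ:ℝ) + 1 ≤ (V.card : ℝ) := by exact_mod_cast hv
    linarith
  have hv1 : (0:ℝ) < (V.card:ℝ) - 1 := by
    have : (ℓ:ℝ) ≥ 1 := by exact_mod_cast hl
    linarith
  rw [Finset.sum_congr rfl (fun x hx => by rw [FG_erase_sub hsz hl hv hx])]
  have hrw : ∀ x : ℕ, (- uC G ℓ V x / ((V.card : ℝ) * ((V.card - 1).choose ℓ)))^2
      = (uC G ℓ V x)^2 / ((V.card : ℝ) * ((V.card - 1).choose ℓ))^2 := by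
    intro x; rw [div_pow]; congr 1; ring
  rw [Finset.sum_congr rfl (fun x _ => hrw x), ← Finset.sum_div]
  have hvar := var_uC hsz hl hv
  have hcnt : (cntG G V : ℝ) ≤ (V.card.choose ℓ : ℝ) := by exact_mod_cast cntG_le hsz V
  have hid4 : ((V.card-2).choose (ℓ-1) : ℝ) * (V.card.choose ℓ : ℝ)
        * (((V.card:ℝ)-1) * ((V.card:ℝ)-ℓ))
      = (ℓ:ℝ) * (V.card:ℝ) * (((V.card-1).choose ℓ : ℝ))^2 := by
    have ha := Nat.add_one_mul_choose_eq (V.card - 2) (ℓ - 1)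
    have e1 : (V.card - 2) + 1 = V.card - 1 := by omega
    have e2 : (ℓ-1) + 1 = ℓ := by omega
    rw [e1, e2] at ha
    -- ha : (V.card-1) * (V.card-2).choose (ℓ-1) = (V.card-1).choose ℓ * ℓ
    have hb := choose_id2 (v := V.card) hl hv
    -- hb : (V.card - ℓ) * V.card.choose ℓ = V.card * (V.card-1).choose ℓ
    have hnat : ((V.card-2).choose (ℓ-1)) * (V.card.choose ℓ)
        * (((V.card)-1) * ((V.card)-ℓ))
        = ℓ * (V.card) * (((V.card-1).choose ℓ))^2 := by
      calc ((V.card-2).choose (ℓ-1)) * (V.card.choose ℓ) * (((V.card)-1) * ((V.card)-ℓ))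
          = ((V.card-1) * (V.card-2).choose (ℓ-1))
            * (((V.card)-ℓ) * V.card.choose ℓ) := by ring
        _ = ((V.card-1).choose ℓ * ℓ) * ((V.card) * (V.card-1).choose ℓ) := by
            rw [ha, hb]
        _ = ℓ * (V.card) * (((V.card-1).choose ℓ))^2 := by ring
    have := congrArg (Nat.cast : ℕ → ℝ) hnat
    push_cast [Nat.cast_sub (show ℓ ≤ V.card by omega),
      Nat.cast_sub (show 1 ≤ V.card by omega)] at this
    linarith
  rw [div_le_div_iff₀ (by positivity) (by positivity)]
  calc (∑ x ∈ V, (uC G ℓ V x)^2) * (((V.card:ℝ)-1) * ((V.card:ℝ)-ℓ))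
      ≤ ((V.card:ℝ)^2 * ((V.card - 2).choose (ℓ - 1)) * (cntG G V))
          * (((V.card:ℝ)-1) * ((V.card:ℝ)-ℓ)) := by
        apply mul_le_mul_of_nonneg_right hvar (by positivity)
    _ ≤ ((V.card:ℝ)^2 * ((V.card - 2).choose (ℓ - 1)) * (V.card.choose ℓ))
          * (((V.card:ℝ)-1) * ((V.card:ℝ)-ℓ)) := by
        apply mul_le_mul_of_nonneg_right _ (by positivity)
        apply mul_le_mul_of_nonneg_left hcnt (by positivity)
    _ = (V.card:ℝ)^2 * (((V.card-2).choose (ℓ-1) : ℝ) * (V.card.choose ℓ : ℝ)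
          * (((V.card:ℝ)-1) * ((V.card:ℝ)-ℓ))) := by ring
    _ = (V.card:ℝ)^2 * ((ℓ:ℝ) * (V.card:ℝ) * (((V.card-1).choose ℓ : ℝ))^2) := by
        rw [hid4]
    _ = (ℓ:ℝ) * (V.card:ℝ) * ((V.card:ℝ) * ((V.card-1).choose ℓ : ℝ))^2 := by ring

lemma step_exp (hsz : ∀ S ∈ G, S.card = ℓ) (hl : 1 ≤ ℓ) (hv : ℓ + 1 ≤ V.card)
    {lam : ℝ} (hlam0 : 0 ≤ lam) (hlam : lam * ℓ ≤ (V.card : ℝ) - ℓ) :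
    ∑ x ∈ V, Real.exp (lam * (FG G ℓ V - FG G ℓ (V.erase x)))
      ≤ (V.card : ℝ) * Real.exp ((3/4) * lam^2
          * ((ℓ:ℝ) / (((V.card:ℝ)-1) * ((V.card:ℝ)-ℓ)))) := by
  have hvl : (0:ℝ) < (V.card:ℝ) - ℓ := by
    have : (ℓ:ℝ) + 1 ≤ (V.card : ℝ) := by exact_mod_cast hv
    linarith
  have hv1 : (0:ℝ) < (V.card:ℝ) - 1 := by
    have : (ℓ:ℝ) ≥ 1 := by exact_mod_cast hl
    linarith
  have hy1 : ∀ x ∈ V, |lam * (FG G ℓ V - FG G ℓ (V.erase x))| ≤ 1 := by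
    intro x hx
    rw [abs_mul, abs_of_nonneg hlam0]
    have h1 : |FG G ℓ V - FG G ℓ (V.erase x)| ≤ (ℓ : ℝ) / ((V.card:ℝ) - ℓ) := by
      rw [abs_sub_comm]; exact FG_step_abs hsz hl hv hx
    calc lam * |FG G ℓ V - FG G ℓ (V.erase x)| ≤ lam * ((ℓ : ℝ) / ((V.card:ℝ) - ℓ)) :=
          mul_le_mul_of_nonneg_left h1 hlam0
      _ = lam * ℓ / ((V.card:ℝ) - ℓ) := by ring
      _ ≤ ((V.card:ℝ) - ℓ) / ((V.card:ℝ) - ℓ) := by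
          gcongr
      _ = 1 := div_self (ne_of_gt hvl)
  have hstep : ∀ x ∈ V, Real.exp (lam * (FG G ℓ V - FG G ℓ (V.erase x)))
      ≤ 1 + lam * (FG G ℓ V - FG G ℓ (V.erase x))
        + (3/4) * (lam * (FG G ℓ V - FG G ℓ (V.erase x)))^2 := by
    intro x hx
    exact exp_quad (hy1 x hx)
  calc ∑ x ∈ V, Real.exp (lam * (FG G ℓ V - FG G ℓ (V.erase x)))
      ≤ ∑ x ∈ V, (1 + lam * (FG G ℓ V - FG G ℓ (V.erase x))
          + (3/4) * (lam * (FG G ℓ V - FG G ℓ (V.erase x)))^2) :=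
        Finset.sum_le_sum hstep
    _ = (V.card : ℝ) + lam * (∑ x ∈ V, (FG G ℓ V - FG G ℓ (V.erase x)))
          + (3/4) * lam^2 * ∑ x ∈ V, (FG G ℓ (V.erase x) - FG G ℓ V)^2 := by
        rw [Finset.sum_add_distrib, Finset.sum_add_distrib, Finset.sum_const,
          ← Finset.mul_sum, ← Finset.mul_sum]
        simp only [nsmul_eq_mul, mul_one]
        congr 1
        rw [Finset.mul_sum, Finset.mul_sum]
        congr 1; ext x
        ring_nf
    _ = (V.card : ℝ)
          + (3/4) * lam^2 * ∑ x ∈ V, (FG G ℓ (V.erase x) - FG G ℓ V)^2 := by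
        have : ∑ x ∈ V, (FG G ℓ V - FG G ℓ (V.erase x))
            = - ∑ x ∈ V, (FG G ℓ (V.erase x) - FG G ℓ V) := by
          rw [← Finset.sum_neg_distrib]; congr 1; ext x; ring
        rw [this, FG_step_mean hsz hl hv]
        ring
    _ ≤ (V.card : ℝ) + (3/4) * lam^2
          * ((ℓ : ℝ) * (V.card : ℝ) / (((V.card:ℝ)-1) * ((V.card:ℝ)-ℓ))) := by
        have := FG_step_var hsz hl hv
        nlinarith [sq_nonneg lam]
    _ = (V.card : ℝ) * (1 + (3/4) * lam^2
          * ((ℓ:ℝ) / (((V.card:ℝ)-1) * ((V.card:ℝ)-ℓ)))) := by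
        field_simp
    _ ≤ (V.card : ℝ) * Real.exp ((3/4) * lam^2
          * ((ℓ:ℝ) / (((V.card:ℝ)-1) * ((V.card:ℝ)-ℓ)))) := by
        have hvpos : (0:ℝ) ≤ (V.card : ℝ) := by positivity
        apply mul_le_mul_of_nonneg_left _ hvpos
        have := Real.add_one_le_exp ((3/4) * lam^2
          * ((ℓ:ℝ) / (((V.card:ℝ)-1) * ((V.card:ℝ)-ℓ))))
        linarith

end step

lemma double_count (g : Finset ℕ → ℝ) (V : Finset ℕ) (n : ℕ) :
    ((V.card - n : ℕ) : ℝ) * ∑ K ∈ Finset.powersetCard n V, g K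
      = ∑ x ∈ V, ∑ K ∈ Finset.powersetCard n (V.erase x), g K := by
  have h1 : ∀ x ∈ V, Finset.powersetCard n (V.erase x)
      = (Finset.powersetCard n V).filter (fun K => x ∉ K) := by
    intro x _
    ext K
    simp only [Finset.mem_powersetCard, Finset.mem_filter, Finset.subset_erase]
    tauto
  have h2 : ∀ K ∈ Finset.powersetCard n V,
      ∑ x ∈ V, (if x ∉ K then g K else 0) = ((V.card - n : ℕ) : ℝ) * g K := by
    intro K hK
    obtain ⟨hKV, hKn⟩ := Finset.mem_powersetCard.mp hK
    rw [Finset.sum_ite, Finset.sum_const, Finset.sum_const, smul_zero, add_zero]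
    have : (V.filter (fun x => x ∉ K)) = V \ K := by
      ext y; simp [Finset.mem_sdiff]
    rw [this, Finset.card_sdiff_of_subset hKV, hKn, nsmul_eq_mul]
  calc ((V.card - n : ℕ) : ℝ) * ∑ K ∈ Finset.powersetCard n V, g K
      = ∑ K ∈ Finset.powersetCard n V, ((V.card - n : ℕ) : ℝ) * g K := by
        rw [Finset.mul_sum]
    _ = ∑ K ∈ Finset.powersetCard n V, ∑ x ∈ V, (if x ∉ K then g K else 0) :=
        Finset.sum_congr rfl (fun K hK => (h2 K hK).symm)
    _ = ∑ x ∈ V, ∑ K ∈ Finset.powersetCard n V, (if x ∉ K then g K else 0) :=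
        Finset.sum_comm
    _ = ∑ x ∈ V, ∑ K ∈ Finset.powersetCard n (V.erase x), g K :=
        Finset.sum_congr rfl (fun x hx => by rw [h1 x hx, Finset.sum_filter])

lemma chain_exp {G : Finset (Finset ℕ)} {ℓ : ℕ} (hsz : ∀ S ∈ G, S.card = ℓ)
    (hl : 1 ≤ ℓ) {n : ℕ} (hn : ℓ + 1 ≤ n) {lam : ℝ} (hlam0 : 0 ≤ lam)
    (hlam : lam * ℓ ≤ (n : ℝ) + 1 - ℓ) :
    ∀ d : ℕ, ∀ V : Finset ℕ, V.card = n + d →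
    ∑ K ∈ Finset.powersetCard n V, Real.exp (lam * (FG G ℓ V - FG G ℓ K))
      ≤ ((n+d).choose n : ℝ) * Real.exp ((3/4) * lam^2 * ℓ
          * (1/((n:ℝ) - ℓ) - 1/((n:ℝ) + d - ℓ))) := by
  intro d
  induction d with
  | zero =>
    intro V hV
    rw [Nat.add_zero] at hV
    rw [← hV, Finset.powersetCard_self, Finset.sum_singleton, sub_self, mul_zero,
      Real.exp_zero, hV, Nat.add_zero, Nat.choose_self,
      show (1/((n:ℝ) - ℓ) - 1/((n:ℝ) + (0:ℕ) - ℓ)) = 0 by push_cast; ring]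
    simp
  | succ d ih =>
    intro V hV
    have hvcard : V.card = n + d + 1 := by omega
    have hvl : ℓ + 1 ≤ V.card := by omega
    have hnl : (0:ℝ) < (n:ℝ) - ℓ := by
      have : (ℓ:ℝ) + 1 ≤ (n:ℝ) := by exact_mod_cast hn
      linarith
    have hvcast : (V.card : ℝ) = (n:ℝ) + d + 1 := by
      rw [hvcard]; push_cast; ring
    have hlr : (1:ℝ) ≤ (ℓ:ℝ) := by exact_mod_cast hl
    have hA : (0:ℝ) < (n:ℝ) + d - ℓ := by linarith [Nat.cast_nonneg (α := ℝ) d]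
    have hB : (0:ℝ) < (n:ℝ) + d + 1 - ℓ := by linarith
    have hD : (0:ℝ) < (n:ℝ) + d := by linarith
    have hlam' : lam * ℓ ≤ (V.card : ℝ) - ℓ := by
      rw [hvcast]
      have : (0:ℝ) ≤ (d:ℝ) := Nat.cast_nonneg d
      linarith
    -- double counting step
    have hdc := double_count (fun K => Real.exp (lam * (FG G ℓ V - FG G ℓ K))) V n
    have hcard_sub : V.card - n = d + 1 := by omega
    rw [hcard_sub] at hdc
    have hsplit : ∀ x ∈ V, ∑ K ∈ Finset.powersetCard n (V.erase x),
        Real.exp (lam * (FG G ℓ V - FG G ℓ K))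
        = Real.exp (lam * (FG G ℓ V - FG G ℓ (V.erase x)))
          * ∑ K ∈ Finset.powersetCard n (V.erase x),
              Real.exp (lam * (FG G ℓ (V.erase x) - FG G ℓ K)) := by
      intro x _
      rw [Finset.mul_sum]
      apply Finset.sum_congr rfl
      intro K _
      rw [← Real.exp_add]
      congr 1
      ring
    set Ed : ℝ := (3/4) * lam^2 * ℓ * (1/((n:ℝ) - ℓ) - 1/((n:ℝ) + d - ℓ)) with hEd
    set q : ℝ := (3/4) * lam^2 * ((ℓ:ℝ) / (((V.card:ℝ)-1) * ((V.card:ℝ)-ℓ))) with hq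
    have hih : ∀ x ∈ V, ∑ K ∈ Finset.powersetCard n (V.erase x),
        Real.exp (lam * (FG G ℓ (V.erase x) - FG G ℓ K))
        ≤ ((n+d).choose n : ℝ) * Real.exp Ed := by
      intro x hx
      apply ih
      rw [Finset.card_erase_of_mem hx]
      omega
    have hstep := step_exp hsz hl hvl hlam0 hlam'
    have hchain : ((d:ℝ)+1) * ∑ K ∈ Finset.powersetCard n V,
        Real.exp (lam * (FG G ℓ V - FG G ℓ K))
        ≤ (((n+d).choose n : ℝ) * Real.exp Ed) * ((V.card : ℝ) * Real.exp q) := by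
      have e1 : ((d:ℝ)+1) = (((d+1 : ℕ)) : ℝ) := by push_cast; ring
      rw [e1, hdc]
      calc ∑ x ∈ V, ∑ K ∈ Finset.powersetCard n (V.erase x),
            Real.exp (lam * (FG G ℓ V - FG G ℓ K))
          ≤ ∑ x ∈ V, Real.exp (lam * (FG G ℓ V - FG G ℓ (V.erase x)))
              * (((n+d).choose n : ℝ) * Real.exp Ed) := by
            apply Finset.sum_le_sum
            intro x hx
            rw [hsplit x hx]
            exact mul_le_mul_of_nonneg_left (hih x hx) (Real.exp_nonneg _)
        _ = (((n+d).choose n : ℝ) * Real.exp Ed)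
              * ∑ x ∈ V, Real.exp (lam * (FG G ℓ V - FG G ℓ (V.erase x))) := by
            rw [← Finset.sum_mul, mul_comm]
        _ ≤ (((n+d).choose n : ℝ) * Real.exp Ed) * ((V.card : ℝ) * Real.exp q) := by
            apply mul_le_mul_of_nonneg_left hstep (by positivity)
    -- choose identity
    have hvC : (V.card:ℝ) * ((n+d).choose n : ℝ) = ((d:ℝ)+1) * ((n+d+1).choose n : ℝ) := by
      have hid := choose_id2 (v := n+d+1) (ℓ := n) (by omega) (by omega)
      have h1 : n + d + 1 - n = d + 1 := by omega
      have h2 : n + d + 1 - 1 = n + d := by omega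
      rw [h1, h2] at hid
      have := congrArg (Nat.cast : ℕ → ℝ) hid
      push_cast at this
      rw [hvcast]
      linarith
    -- exponent comparison
    have hexp : Ed + q ≤ (3/4) * lam^2 * ℓ
        * (1/((n:ℝ) - ℓ) - 1/((n:ℝ) + (d+1:ℕ) - ℓ)) := by
      have h1 : 1/((n:ℝ)+d-ℓ) - 1/((n:ℝ)+d+1-ℓ)
          = 1/(((n:ℝ)+d-ℓ)*((n:ℝ)+d+1-ℓ)) := by
        field_simp
        ring
      have h2 : (1:ℝ)/(((n:ℝ)+d)*((n:ℝ)+d+1-ℓ))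
          ≤ 1/(((n:ℝ)+d-ℓ)*((n:ℝ)+d+1-ℓ)) := by
        apply one_div_le_one_div_of_le (by positivity)
        apply mul_le_mul_of_nonneg_right (by linarith) (le_of_lt hB)
      have hqe : q = (3/4) * lam^2 * ℓ * (1/(((n:ℝ)+d)*((n:ℝ)+d+1-ℓ))) := by
        rw [hq, hvcast]
        have : (n:ℝ) + d + 1 - 1 = (n:ℝ) + d := by ring
        rw [this]
        ring
      have hEd1 : (3/4) * lam^2 * ℓ * (1/((n:ℝ) - ℓ) - 1/((n:ℝ) + (d+1:ℕ) - ℓ))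
          = Ed + (3/4) * lam^2 * ℓ * (1/((n:ℝ)+d-ℓ) - 1/((n:ℝ)+d+1-ℓ)) := by
        rw [hEd]
        push_cast
        ring
      rw [hEd1, hqe, h1]
      have hc : (0:ℝ) ≤ (3/4) * lam^2 * ℓ := by positivity
      nlinarith [mul_le_mul_of_nonneg_left h2 hc]
    -- combine
    have hfin : (((n+d).choose n : ℝ) * Real.exp Ed) * ((V.card : ℝ) * Real.exp q)
        ≤ ((d:ℝ)+1) * (((n+(d+1)).choose n : ℝ) * Real.exp ((3/4) * lam^2 * ℓ
            * (1/((n:ℝ) - ℓ) - 1/((n:ℝ) + (d+1:ℕ) - ℓ)))) := by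
      have e0 : n + (d+1) = n + d + 1 := by ring
      rw [e0]
      calc (((n+d).choose n : ℝ) * Real.exp Ed) * ((V.card : ℝ) * Real.exp q)
          = ((V.card:ℝ) * ((n+d).choose n : ℝ)) * Real.exp (Ed + q) := by
            rw [Real.exp_add]; ring
        _ ≤ ((V.card:ℝ) * ((n+d).choose n : ℝ)) * Real.exp ((3/4) * lam^2 * ℓ
              * (1/((n:ℝ) - ℓ) - 1/((n:ℝ) + (d+1:ℕ) - ℓ))) := by
            apply mul_le_mul_of_nonneg_left (Real.exp_le_exp.mpr hexp) (by positivity)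
        _ = ((d:ℝ)+1) * (((n+d+1).choose n : ℝ) * Real.exp ((3/4) * lam^2 * ℓ
              * (1/((n:ℝ) - ℓ) - 1/((n:ℝ) + (d+1:ℕ) - ℓ)))) := by
            rw [hvC]; ring
    have hd1 : (0:ℝ) < (d:ℝ) + 1 := by positivity
    exact le_of_mul_le_mul_left (hchain.trans hfin) hd1

set_option maxHeartbeats 2000000 in
theorem stmt17 (m ℓ ℓ' t : ℕ) (ht : 1 ≤ t) (hm : t * ℓ + ℓ' ≤ m)
    (a : ℝ) (ha : 0 < a)
    (G : Finset (Finset ℕ)) (hG : G ⊆ (Finset.Icc 1 m).powersetCard ℓ) :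
    let ε : ℝ := (2 * a + Real.sqrt (8 * Real.log 2)) / Real.sqrt t
    let α : ℝ := (G.card : ℝ) / (m.choose ℓ : ℝ)
    ((((Finset.Icc 1 m).powersetCard ℓ').filter fun H =>
        ((G.filter fun S => Disjoint S H).card : ℝ) <
          (α - ε) * ((m - ℓ').choose ℓ : ℝ)).card : ℝ) / ((m.choose ℓ' : ℕ) : ℝ) <
      2 * Real.exp (-a ^ 2 / 2) := by
  intro ε α
  have hεdef : ε = (2 * a + Real.sqrt (8 * Real.log 2)) / Real.sqrt t := rfl
  have hαdef : α = (G.card : ℝ) / (m.choose ℓ : ℝ) := rfl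
  clear_value ε α
  set V : Finset ℕ := Finset.Icc 1 m with hVdef
  have hVcard : V.card = m := by rw [hVdef, Nat.card_Icc]; omega
  have hl'm : ℓ' ≤ m := by
    have : t * ℓ ≥ 0 := Nat.zero_le _
    omega
  have hDpos : (0:ℝ) < ((m.choose ℓ' : ℕ) : ℝ) := by
    exact_mod_cast Nat.choose_pos hl'm
  have hRpos : (0:ℝ) < 2 * Real.exp (-a ^ 2 / 2) := by positivity
  have hlog2 : (0.6931471803 : ℝ) < Real.log 2 := Real.log_two_gt_d9
  have hcsq : (4:ℝ) < 8 * Real.log 2 := by linarith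
  have hc2 : (2:ℝ) < Real.sqrt (8 * Real.log 2) := by
    have h := Real.lt_sqrt (show (0:ℝ) ≤ 2 by norm_num) (y := 8 * Real.log 2)
    rw [h]
    norm_num
    linarith
  have htpos : (0:ℝ) < (t:ℝ) := by exact_mod_cast ht
  have hst : (0:ℝ) < Real.sqrt t := Real.sqrt_pos.mpr htpos
  have hεpos : 0 < ε := by
    rw [hεdef]
    apply div_pos (by linarith) hst
  by_cases hαε : α ≤ ε
  · -- trivial case: the filter is empty
    have hempty : ((Finset.powersetCard ℓ' V).filter fun H =>
        ((G.filter fun S => Disjoint S H).card : ℝ) <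
          (α - ε) * ((m - ℓ').choose ℓ : ℝ)) = ∅ := by
      apply Finset.filter_false_of_mem
      intro H _
      rw [not_lt]
      have h1 : (α - ε) ≤ 0 := by linarith
      have h2 : (0:ℝ) ≤ ((m - ℓ').choose ℓ : ℝ) := by positivity
      nlinarith [Nat.cast_nonneg (α := ℝ) (G.filter fun S => Disjoint S H).card]
    rw [hempty]
    simpa using hRpos
  push_neg at hαε
  have hsz : ∀ S ∈ G, S.card = ℓ := fun S hS => (Finset.mem_powersetCard.mp (hG hS)).2
  have hSsubV : ∀ S ∈ G, S ⊆ V := fun S hS => (Finset.mem_powersetCard.mp (hG hS)).1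
  have hGcard : G.card ≤ m.choose ℓ := by
    have := Finset.card_le_card hG
    rwa [Finset.card_powersetCard, hVcard] at this
  have hchoosepos : 0 < m.choose ℓ := by
    by_contra h
    have h0 : m.choose ℓ = 0 := by omega
    have : α = 0 := by rw [hαdef, h0]; simp
    linarith
  have hα1 : α ≤ 1 := by
    rw [hαdef, div_le_one (by exact_mod_cast hchoosepos)]
    exact_mod_cast hGcard
  have hε1 : ε < 1 := lt_of_lt_of_le hαε hα1
  rcases Nat.eq_zero_or_pos ℓ with hℓ0 | hl
  · -- ℓ = 0 case
    subst hℓ0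
    have hGne : G = {∅} := by
      have hsub : G ⊆ {∅} := by
        intro S hS
        have := hG hS
        rwa [Finset.powersetCard_zero] at this
      rcases Finset.subset_singleton_iff.mp hsub with h | h
      · exfalso
        have : α = 0 := by rw [hαdef, h]; simp
        linarith
      · exact h
    have hα : α = 1 := by
      rw [hαdef, hGne, Nat.choose_zero_right]; simp
    have hempty : ((Finset.powersetCard ℓ' V).filter fun H =>
        ((G.filter fun S => Disjoint S H).card : ℝ) <
          (α - ε) * ((m - ℓ').choose 0 : ℝ)) = ∅ := by
      apply Finset.filter_false_of_mem
      intro H _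
      rw [not_lt, hGne]
      have hfe : ({∅} : Finset (Finset ℕ)).filter (fun S => Disjoint S H) = {∅} := by
        rw [Finset.filter_singleton]
        simp
      rw [hfe, hα, Nat.choose_zero_right]
      simp
      linarith
    rw [hempty]
    simpa using hRpos
  -- main case
  have hsqt : 2 * a + Real.sqrt (8 * Real.log 2) < Real.sqrt t := by
    rw [hεdef] at hε1
    have := (div_lt_one hst).mp hε1
    linarith
  have ht4 : (4:ℝ) < (t:ℝ) := by
    nlinarith [Real.sq_sqrt (le_of_lt htpos), Real.sqrt_nonneg (t:ℝ),
      (show (2:ℝ) < Real.sqrt t by linarith)]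
  have ht5 : 5 ≤ t := by
    have : (4:ℕ) < t := by exact_mod_cast ht4
    omega
  set n : ℕ := m - ℓ' with hndef
  have hn_tl : t * ℓ ≤ n := by omega
  have hmn : m = n + ℓ' := by omega
  have hnl : ℓ + 1 ≤ n := by
    have h5l : 5 * ℓ ≤ t * ℓ := Nat.mul_le_mul_right ℓ ht5
    omega
  have hnlr : (0:ℝ) < (n:ℝ) - ℓ := by
    have : (ℓ:ℝ) + 1 ≤ (n:ℝ) := by exact_mod_cast hnl
    linarith
  have ht1r : (1:ℝ) ≤ (t:ℝ) := by exact_mod_cast ht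
  have hlr : (1:ℝ) ≤ (ℓ:ℝ) := by exact_mod_cast hl
  have htl_r : ((t:ℝ) - 1) * ℓ ≤ (n:ℝ) - ℓ := by
    have h1 : ((t * ℓ : ℕ) : ℝ) ≤ (n:ℝ) := by exact_mod_cast hn_tl
    push_cast at h1
    nlinarith
  set lam : ℝ := (2/3) * ε * ((t:ℝ) - 1) with hlamdef
  clear_value lam
  have hlam0 : 0 ≤ lam := by
    rw [hlamdef]
    apply mul_nonneg (by positivity) (by linarith)
  have hlam : lam * ℓ ≤ (n : ℝ) + 1 - ℓ := by
    have h1 : lam ≤ (2/3) * ((t:ℝ) - 1) := by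
      rw [hlamdef]
      nlinarith
    nlinarith
  have hCE := chain_exp hsz hl hnl hlam0 hlam ℓ' V (by omega)
  have hFGV : FG G ℓ V = α := by
    rw [hαdef]
    unfold FG cntG
    rw [Finset.filter_true_of_mem (fun S hS => hSsubV S hS), hVcard]
  -- translate bad H's into bad K's
  have hkey : ∀ H ∈ Finset.powersetCard ℓ' V,
      (G.filter fun S => Disjoint S H).card = cntG G (V \ H) := by
    intro H _
    unfold cntG
    congr 1
    apply Finset.filter_congr
    intro S hS
    have hSV := hSsubV S hS
    simp only [Finset.subset_sdiff, eq_iff_iff]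
    exact ⟨fun h => ⟨hSV, h⟩, fun h => h.2⟩
  have hkey2 : ∀ K ∈ Finset.powersetCard n V,
      (G.filter fun S => Disjoint S (V \ K)).card = cntG G K := by
    intro K hK
    have hKV : K ⊆ V := (Finset.mem_powersetCard.mp hK).1
    unfold cntG
    congr 1
    apply Finset.filter_congr
    intro S hS
    have hSV := hSsubV S hS
    first
      | rw [eq_iff_iff]
      | skip
    constructor
    · intro h
      have h2 : S ⊆ V \ (V \ K) := Finset.subset_sdiff.mpr ⟨hSV, h⟩
      rwa [Finset.sdiff_sdiff_eq_self hKV] at h2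
    · intro h
      exact Finset.disjoint_sdiff.mono_left h
  have hbadeq : (((Finset.powersetCard ℓ' V).filter fun H =>
        ((G.filter fun S => Disjoint S H).card : ℝ) <
          (α - ε) * (n.choose ℓ : ℝ)).card)
      = (((Finset.powersetCard n V).filter fun K =>
          ((cntG G K : ℝ) < (α - ε) * (n.choose ℓ : ℝ))).card) := by
    apply Finset.card_nbij' (fun H => V \ H) (fun K => V \ K)
    · intro H hH
      rw [Finset.mem_coe, Finset.mem_filter] at hH ⊢
      obtain ⟨hHmem, hHpred⟩ := hH
      obtain ⟨hHV, hHcard⟩ := Finset.mem_powersetCard.mp hHmem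
      refine ⟨Finset.mem_powersetCard.mpr ⟨Finset.sdiff_subset, ?_⟩, ?_⟩
      · rw [Finset.card_sdiff_of_subset hHV, hVcard, hHcard]
      · rw [← hkey H hHmem]
        exact hHpred
    · intro K hK
      rw [Finset.mem_coe, Finset.mem_filter] at hK ⊢
      obtain ⟨hKmem, hKpred⟩ := hK
      obtain ⟨hKV, hKcard⟩ := Finset.mem_powersetCard.mp hKmem
      refine ⟨Finset.mem_powersetCard.mpr ⟨Finset.sdiff_subset, ?_⟩, ?_⟩
      · rw [Finset.card_sdiff_of_subset hKV, hVcard, hKcard]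
        omega
      · rw [hkey2 K hKmem]
        exact hKpred
    · intro H hH
      rw [Finset.mem_coe, Finset.mem_filter] at hH
      exact Finset.sdiff_sdiff_eq_self (Finset.mem_powersetCard.mp hH.1).1
    · intro K hK
      rw [Finset.mem_coe, Finset.mem_filter] at hK
      exact Finset.sdiff_sdiff_eq_self (Finset.mem_powersetCard.mp hK.1).1
  set bad := ((Finset.powersetCard n V).filter fun K =>
      ((cntG G K : ℝ) < (α - ε) * (n.choose ℓ : ℝ))) with hbaddef
  have hCnl : (0:ℝ) < (n.choose ℓ : ℝ) := by
    exact_mod_cast Nat.choose_pos (by omega : ℓ ≤ n)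
  -- Chernoff lower bound for bad K's
  have hthresh : ∀ K ∈ bad, Real.exp (lam * ε)
      ≤ Real.exp (lam * (FG G ℓ V - FG G ℓ K)) := by
    intro K hK
    rw [hbaddef, Finset.mem_filter] at hK
    obtain ⟨hKmem, hKpred⟩ := hK
    have hKcard : K.card = n := (Finset.mem_powersetCard.mp hKmem).2
    have hFK : FG G ℓ K < α - ε := by
      unfold FG
      rw [hKcard, div_lt_iff₀ hCnl]
      exact hKpred
    apply Real.exp_le_exp.mpr
    rw [hFGV]
    nlinarith
  have hsum_lb : (bad.card : ℝ) * Real.exp (lam * ε)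
      ≤ ∑ K ∈ Finset.powersetCard n V, Real.exp (lam * (FG G ℓ V - FG G ℓ K)) := by
    calc (bad.card : ℝ) * Real.exp (lam * ε)
        = ∑ _K ∈ bad, Real.exp (lam * ε) := by
          rw [Finset.sum_const, nsmul_eq_mul]
      _ ≤ ∑ K ∈ bad, Real.exp (lam * (FG G ℓ V - FG G ℓ K)) :=
          Finset.sum_le_sum hthresh
      _ ≤ ∑ K ∈ Finset.powersetCard n V, Real.exp (lam * (FG G ℓ V - FG G ℓ K)) :=
          Finset.sum_le_sum_of_subset_of_nonneg (Finset.filter_subset _ _)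
            (fun _ _ _ => Real.exp_nonneg _)
  -- exponent bound
  have ht1 : (0:ℝ) < (t:ℝ) - 1 := by linarith
  have hEbound : (3/4) * lam^2 * ℓ * (1/((n:ℝ) - ℓ) - 1/((n:ℝ) + ℓ' - ℓ))
      ≤ (3/4) * lam^2 * (1/((t:ℝ)-1)) := by
    have hl'0 : (0:ℝ) ≤ (ℓ' : ℝ) := Nat.cast_nonneg _
    have h1 : (0:ℝ) < (n:ℝ) + ℓ' - ℓ := by linarith
    have h2 : (ℓ:ℝ) * (1/((n:ℝ)-ℓ)) ≤ 1/((t:ℝ)-1) := by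
      rw [mul_one_div, div_le_div_iff₀ hnlr ht1]
      linarith
    have h3 : (ℓ:ℝ) * (1/((n:ℝ) - ℓ) - 1/((n:ℝ) + ℓ' - ℓ)) ≤ 1/((t:ℝ)-1) := by
      have : (0:ℝ) ≤ (ℓ:ℝ) * (1/((n:ℝ) + ℓ' - ℓ)) := by positivity
      nlinarith
    calc (3/4) * lam^2 * ℓ * (1/((n:ℝ) - ℓ) - 1/((n:ℝ) + ℓ' - ℓ))
        = (3/4) * lam^2 * ((ℓ:ℝ) * (1/((n:ℝ) - ℓ) - 1/((n:ℝ) + ℓ' - ℓ))) := by ring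
      _ ≤ (3/4) * lam^2 * (1/((t:ℝ)-1)) := by
          apply mul_le_mul_of_nonneg_left h3 (by positivity)
  have hCmn : (((n + ℓ').choose n : ℕ) : ℝ) = ((m.choose ℓ' : ℕ) : ℝ) := by
    have h1 : (n + ℓ').choose n = m.choose n := by rw [← hmn]
    have h2 : m.choose n = m.choose ℓ' := by
      rw [hndef]
      exact Nat.choose_symm hl'm
    rw [h1, h2]
  have hexp_id : (3/4) * lam^2 * (1/((t:ℝ)-1)) - lam * ε = -(ε^2 * ((t:ℝ)-1)) / 3 := by
    rw [hlamdef]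
    field_simp
    ring
  have hnum : (bad.card : ℝ)
      ≤ ((m.choose ℓ' : ℕ) : ℝ) * Real.exp (-(ε^2 * ((t:ℝ)-1)) / 3) := by
    have hexp_pos : (0:ℝ) < Real.exp (lam * ε) := Real.exp_pos _
    rw [← hexp_id]
    have step1 : (bad.card : ℝ) * Real.exp (lam * ε)
        ≤ (((n + ℓ').choose n : ℕ) : ℝ) * Real.exp ((3/4) * lam^2 * ℓ
            * (1/((n:ℝ) - ℓ) - 1/((n:ℝ) + ℓ' - ℓ))) := hsum_lb.trans hCE
    have step2 : (bad.card : ℝ) * Real.exp (lam * ε)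
        ≤ ((m.choose ℓ' : ℕ) : ℝ) * Real.exp ((3/4) * lam^2 * (1/((t:ℝ)-1))) := by
      rw [← hCmn]
      exact step1.trans (mul_le_mul_of_nonneg_left
        (Real.exp_le_exp.mpr hEbound) (by positivity))
    have := mul_le_mul_of_nonneg_right step2 (le_of_lt (Real.exp_pos (- (lam * ε))))
    calc (bad.card : ℝ)
        = (bad.card : ℝ) * Real.exp (lam * ε) * Real.exp (-(lam * ε)) := by
          rw [mul_assoc, ← Real.exp_add]
          simp
      _ ≤ ((m.choose ℓ' : ℕ) : ℝ) * Real.exp ((3/4) * lam^2 * (1/((t:ℝ)-1)))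
            * Real.exp (-(lam * ε)) := this
      _ = ((m.choose ℓ' : ℕ) : ℝ)
            * Real.exp ((3/4) * lam^2 * (1/((t:ℝ)-1)) - lam * ε) := by
          rw [mul_assoc, ← Real.exp_add]
          ring_nf
  -- final numeric comparison
  have hεsq : ε^2 * t = (2 * a + Real.sqrt (8 * Real.log 2))^2 := by
    rw [hεdef, div_pow, Real.sq_sqrt (le_of_lt htpos)]
    field_simp
  have h4a : 4 * a^2 ≤ (2 * a + Real.sqrt (8 * Real.log 2))^2 := by
    nlinarith [Real.sqrt_nonneg (8 * Real.log 2)]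
  have hexp_cmp : -(ε^2 * ((t:ℝ)-1)) / 3 ≤ -a^2/2 := by
    have key : a^2/2 ≤ ε^2 * ((t:ℝ)-1) / 3 := by
      have h1 : ε^2 = (2 * a + Real.sqrt (8 * Real.log 2))^2 / t := by
        rw [← hεsq]; field_simp
      have h3 : 4 * a^2 ≤ ε^2 * t := by rw [hεsq]; exact h4a
      have h5 : 5 * ε^2 ≤ ε^2 * (t:ℝ) := by
        have h5t : (5:ℝ) ≤ (t:ℝ) := by exact_mod_cast ht5
        nlinarith [sq_nonneg ε]
      have hx : ε^2 * ((t:ℝ)-1) = ε^2 * t - ε^2 := by ring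
      rw [hx]
      linarith [h3, h5, sq_nonneg a]
    linarith
  rw [hbadeq]
  calc ((bad.card : ℕ) : ℝ) / ((m.choose ℓ' : ℕ) : ℝ)
      ≤ Real.exp (-(ε^2 * ((t:ℝ)-1)) / 3) := by
        rw [div_le_iff₀ hDpos]
        calc ((bad.card : ℕ) : ℝ)
            ≤ ((m.choose ℓ' : ℕ) : ℝ) * Real.exp (-(ε^2 * ((t:ℝ)-1)) / 3) := hnum
          _ = Real.exp (-(ε^2 * ((t:ℝ)-1)) / 3) * ((m.choose ℓ' : ℕ) : ℝ) := by ring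
    _ ≤ Real.exp (-a^2/2) := Real.exp_le_exp.mpr hexp_cmp
    _ < 2 * Real.exp (-a^2/2) := by
        nlinarith [Real.exp_pos (-a^2/2)]
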